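/- For any banana tree G of genus g, we have gon(G) ≤ ⌊(g+3)/2⌋. -/

import Mathlib

open Finset

attribute [local instance] Classical.propDecidable

noncomputable section

/-- A finite loopless multigraph on vertex type `V`, given by a symmetric
edge-multiplicity function: `mul u v` is the number of edges joining `u` and `v`. -/
structure Multigraph (V : Type) [Fintype V] where
  mul : V → V → ℕ
  symm : ∀ u v, mul u v = mul v u
  loopless : ∀ v, mul v v = 0

namespace Multigraph

variable {V : Type} [Fintype V]

/-- The underlying simple graph of a multigraph. -/
def underlying (G : Multigraph V) : SimpleGraph V where
  Adj u v := 0 < G.mul u v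
  symm := by
    constructor
    intro u v h
    change 0 < G.mul u v at h
    change 0 < G.mul v u
    rwa [G.symm] at h
  loopless := by
    constructor
    intro v h
    simp [G.loopless] at h

/-- A multigraph is connected if its underlying simple graph is. -/
def Connected (G : Multigraph V) : Prop := G.underlying.Connected

/-- A banana tree is a multigraph whose underlying simple graph is a tree. -/
def IsBananaTree (G : Multigraph V) : Prop := G.underlying.IsTree

/-- The valence (degree) of a vertex. -/
def valence (G : Multigraph V) (v : V) : ℕ := ∑ w, G.mul v w

/-- The number of edges of a multigraph. -/
def edgeCount (G : Multigraph V) : ℕ := (∑ u, ∑ v, G.mul u v) / 2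

/-- The genus (first Betti number) `|E| - |V| + 1` of a connected multigraph. -/
def genus (G : Multigraph V) : ℕ := G.edgeCount + 1 - Fintype.card V

/-- The degree of a divisor: the total number of chips. -/
def degree (D : V → ℤ) : ℤ := ∑ v, D v

/-- A divisor is effective if it is nonnegative everywhere. -/
def Effective (D : V → ℤ) : Prop := ∀ v, 0 ≤ D v

/-- Linear equivalence of divisors: `D'` is obtained from `D` by a finite sequence of
chip-firing moves, equivalently (for connected graphs) via an integral firing script `σ`. -/
def LinEquiv (G : Multigraph V) (D D' : V → ℤ) : Prop :=
  ∃ σ : V → ℤ, ∀ v, D' v = D v + ∑ w, (G.mul v w : ℤ) * (σ w - σ v)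

/-- A divisor has positive rank if for every vertex `v` it is linearly equivalent to an
effective divisor placing at least one chip on `v`. -/
def PosRank (G : Multigraph V) (D : V → ℤ) : Prop :=
  ∀ v, ∃ D', G.LinEquiv D D' ∧ Effective D' ∧ 1 ≤ D' v

/-- The (divisorial) gonality: the minimum degree of a positive-rank effective divisor. -/
def gonality (G : Multigraph V) : ℕ :=
  sInf {d : ℕ | ∃ D : V → ℤ, Effective D ∧ G.PosRank D ∧ degree D = (d : ℤ)}

/-- `f(G, v, k)`: the minimum degree of an effective divisor `D` on `G` such that
`D + k·v` has positive rank. -/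
def fmin (G : Multigraph V) (v : V) (k : ℕ) : ℕ :=
  sInf {d : ℕ | ∃ D : V → ℤ, Effective D ∧
    G.PosRank (fun u => D u + if u = v then (k : ℤ) else 0) ∧ degree D = (d : ℤ)}

/-- Delete a vertex from a multigraph. -/
def deleteVertex (G : Multigraph V) (v : V) : Multigraph {u : V // u ≠ v} where
  mul a b := G.mul a.1 b.1
  symm := fun a b => G.symm a.1 b.1
  loopless := fun a => G.loopless a.1

/-- Delete one single edge between `u` and `w` (if any) from a multigraph. -/
def deleteOneEdge (G : Multigraph V) (u w : V) : Multigraph V where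
  mul x y := if (x = u ∧ y = w) ∨ (x = w ∧ y = u) then G.mul x y - 1 else G.mul x y
  symm := by
    intro x y
    by_cases h : (x = u ∧ y = w) ∨ (x = w ∧ y = u)
    · have h' : (y = u ∧ x = w) ∨ (y = w ∧ x = u) := by tauto
      simp [h, h', G.symm x y]
    · have h' : ¬((y = u ∧ x = w) ∨ (y = w ∧ x = u)) := by tauto
      simp [h, h', G.symm x y]
  loopless := by
    intro v
    by_cases h : (v = u ∧ v = w) ∨ (v = w ∧ v = u)
    · simp [h, G.loopless]
    · simp [h, G.loopless]

/-- The adjacency move from `v` to `w` on a banana tree: the subset-firing move at the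
connected component of `v` after removing the `v`-`w` edge bunch.  Its net effect is to
move `|E(v,w)|` chips from `v` to `w`. -/
def adjMove (G : Multigraph V) (v w : V) (D : V → ℤ) : V → ℤ :=
  fun u => if u = v then D u - (G.mul v w : ℤ)
    else if u = w then D u + (G.mul v w : ℤ) else D u

/-- A single legal adjacency move: both divisors are effective and the second is
obtained from the first by an adjacency move between adjacent vertices. -/
def LegalAdjStep (G : Multigraph V) (D D' : V → ℤ) : Prop :=
  ∃ v w, G.underlying.Adj v w ∧ Effective D ∧ Effective D' ∧ D' = G.adjMove v w D

/-- A scramble: a collection of nonempty vertex sets (eggs), each inducing a connected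
subgraph. -/
def IsScramble (G : Multigraph V) (S : Finset (Finset V)) : Prop :=
  ∀ X ∈ S, X.Nonempty ∧ (G.underlying.induce (X : Set V)).Connected

/-- A hitting set of a scramble: a set of vertices meeting every egg. -/
def IsHittingSet (S : Finset (Finset V)) (T : Finset V) : Prop :=
  ∀ X ∈ S, (X ∩ T).Nonempty

/-- The hitting number of a scramble. -/
def hittingNumber (S : Finset (Finset V)) : ℕ∞ :=
  sInf {t : ℕ∞ | ∃ T : Finset V, IsHittingSet S T ∧ (T.card : ℕ∞) = t}

/-- The simple graph remaining after removing `c u w` of the edges of each bunch. -/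
def cutGraph (G : Multigraph V) (c : V → V → ℕ) : SimpleGraph V where
  Adj u w := u ≠ w ∧ c u w < G.mul u w ∧ c w u < G.mul w u
  symm := ⟨fun u w h => ⟨h.1.symm, h.2.2, h.2.1⟩⟩
  loopless := ⟨fun u h => h.1 rfl⟩

/-- `c` describes an egg-cut of the scramble `S`: a set of edges of `G` (given by the
number `c u w` of edges removed from each bunch) whose removal leaves at least two
connected components each completely containing an egg. -/
def IsEggCut (G : Multigraph V) (S : Finset (Finset V)) (c : V → V → ℕ) : Prop :=
  (∀ u w, c u w = c w u) ∧ (∀ u w, c u w ≤ G.mul u w) ∧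
  ∃ X₁ ∈ S, ∃ X₂ ∈ S,
    (∀ x ∈ X₁, ∀ y ∈ X₁, (G.cutGraph c).Reachable x y) ∧
    (∀ x ∈ X₂, ∀ y ∈ X₂, (G.cutGraph c).Reachable x y) ∧
    (∀ x ∈ X₁, ∀ y ∈ X₂, ¬ (G.cutGraph c).Reachable x y)

/-- The egg-cut number of a scramble (`⊤` if no egg-cut exists). -/
def eggCutNumber (G : Multigraph V) (S : Finset (Finset V)) : ℕ∞ :=
  sInf {t : ℕ∞ | ∃ c : V → V → ℕ, G.IsEggCut S c ∧
    ((∑ u, ∑ w, c u w : ℕ) : ℕ∞) = 2 * t}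

/-- The order of a scramble: the minimum of its hitting number and egg-cut number. -/
def scrambleOrder (G : Multigraph V) (S : Finset (Finset V)) : ℕ∞ :=
  min (hittingNumber S) (G.eggCutNumber S)

/-- The scramble number of a multigraph: the maximum order of a scramble on it. -/
def scrambleNumber (G : Multigraph V) : ℕ∞ :=
  sSup {m : ℕ∞ | ∃ S : Finset (Finset V), G.IsScramble S ∧ G.scrambleOrder S = m}

/-- The weight of a node `t` in a tree-cut decomposition `(T, X)`: the number of vertices
mapped to `t` plus the number of edges routed through `t` with neither endpoint mapped
to `t`. -/
def nodeWeight (G : Multigraph V) {N : Type} [Fintype N] (T : SimpleGraph N)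
    (X : V → N) (t : N) : ℕ :=
  (Finset.univ.filter fun v => X v = t).card +
    (∑ u, ∑ w, if X u ≠ t ∧ X w ≠ t ∧
        ¬ (T.deleteEdges {e | t ∈ e}).Reachable (X u) (X w)
      then G.mul u w else 0) / 2

/-- The weight of a link `pq` in a tree-cut decomposition `(T, X)`: the number of edges
of `G` routed through that link. -/
def linkWeight (G : Multigraph V) {N : Type} (T : SimpleGraph N)
    (X : V → N) (p q : N) : ℕ :=
  (∑ u, ∑ w, if ¬ (T.deleteEdges {s(p, q)}).Reachable (X u) (X w)
    then G.mul u w else 0) / 2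

/-- The width of a tree-cut decomposition `(T, X)`: the maximum of all node and link
weights. -/
def tcdWidth (G : Multigraph V) {N : Type} [Fintype N] (T : SimpleGraph N)
    (X : V → N) : ℕ :=
  max (Finset.univ.sup fun t => G.nodeWeight T X t)
      (Finset.univ.sup fun p : N × N =>
        if T.Adj p.1 p.2 then G.linkWeight T X p.1 p.2 else 0)

/-- The screewidth of a multigraph: the minimum width of a tree-cut decomposition. -/
def screewidth (G : Multigraph V) : ℕ :=
  sInf {w : ℕ | ∃ (m : ℕ) (T : SimpleGraph (Fin m)), T.IsTree ∧
    ∃ X : V → Fin m, G.tcdWidth T X = w}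

/-- The banana path on `n+1` vertices `v_0, …, v_n`, with `a i` edges joining
`v_i` and `v_{i+1}` (for `0 ≤ i < n`). -/
def bananaPath (n : ℕ) (a : ℕ → ℕ) : Multigraph (Fin (n + 1)) where
  mul i j := if i.val + 1 = j.val then a i.val else if j.val + 1 = i.val then a j.val else 0
  symm := by
    intro u v
    try dsimp only
    split_ifs <;> first | rfl | (exfalso; omega)
  loopless := by
    intro v
    have h : ¬ (v.val + 1 = v.val) := by omega
    simp [h]

/-- The banana star with central vertex `Sum.inl ()` and, for each `i : Fin k`,
`r i` leaves joined to the center by `a i` parallel edges. -/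
def bananaStar (k : ℕ) (a r : Fin k → ℕ) :
    Multigraph (Unit ⊕ (Σ i : Fin k, Fin (r i))) where
  mul x y :=
    match x, y with
    | Sum.inl _, Sum.inr ⟨i, _⟩ => a i
    | Sum.inr ⟨i, _⟩, Sum.inl _ => a i
    | _, _ => 0
  symm := by
    intro u v
    rcases u with u | ⟨i, li⟩ <;> rcases v with v | ⟨j, lj⟩ <;> rfl
  loopless := by
    intro v
    rcases v with v | ⟨i, li⟩ <;> rfl

end Multigraph


namespace BananaAux

open Multigraph

variable {V : Type} [Fintype V]

/-- slot weight -/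
def sw (r : ℕ) : ℕ := 2 * r - 3

lemma sw_mono {a b : ℕ} (h : a ≤ b) : sw a ≤ sw b := by unfold sw; omega

lemma sw_max_le (a b : ℕ) : sw (max a b) ≤ sw a + sw b := by
  rcases Nat.le_total a b with h | h
  · rw [max_eq_right h]; unfold sw; omega
  · rw [max_eq_left h]; unfold sw; omega

/-- delete the whole bunch between `u` and `w` -/
def delBunch (G : Multigraph V) (u w : V) : Multigraph V where
  mul x y := if (x = u ∧ y = w) ∨ (x = w ∧ y = u) then 0 else G.mul x y
  symm := by
    intro x y
    by_cases h : (x = u ∧ y = w) ∨ (x = w ∧ y = u)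
    · have h' : (y = u ∧ x = w) ∨ (y = w ∧ x = u) := by tauto
      simp [h, h']
    · have h' : ¬ ((y = u ∧ x = w) ∨ (y = w ∧ x = u)) := by tauto
      simp [h, h', G.symm x y]
  loopless := by
    intro x
    by_cases h : (x = u ∧ x = w) ∨ (x = w ∧ x = u)
    · simp [h]
    · simp [h, G.loopless]

lemma delBunch_mul_of_ne {G : Multigraph V} {u w x y : V}
    (hx : x ≠ u) (hy : y ≠ u) : (delBunch G u w).mul x y = G.mul x y := by
  have h : ¬ ((x = u ∧ y = w) ∨ (x = w ∧ y = u)) := by tauto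
  simp [delBunch, h]

lemma delBunch_mul_u {G : Multigraph V} {u w y : V}
    (hw : ∀ z, G.mul u z ≠ 0 → z = w) : (delBunch G u w).mul u y = 0 := by
  by_cases hy : y = w
  · subst hy; simp [delBunch]
  · have : G.mul u y = 0 := by
      by_contra h; exact hy (hw y h)
    simp [delBunch, this]

lemma delBunch_mul_u' {G : Multigraph V} {u w y : V}
    (hw : ∀ z, G.mul u z ≠ 0 → z = w) : (delBunch G u w).mul y u = 0 := by
  rw [(delBunch G u w).symm y u, delBunch_mul_u hw]

lemma delBunch_adj {G : Multigraph V} {u w x y : V} (hx : x ≠ u) (hy : y ≠ u) :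
    (delBunch G u w).underlying.Adj x y ↔ G.underlying.Adj x y := by
  unfold underlying
  simp only [delBunch_mul_of_ne hx hy]

/-- walk surgery: removing a leaf bunch preserves reachability among other vertices -/
lemma reach_del (G : Multigraph V) (u w : V) (hw : ∀ z, G.mul u z ≠ 0 → z = w) :
    ∀ (n : ℕ) (x y : V), x ≠ u → y ≠ u → ∀ (p : G.underlying.Walk x y), p.length ≤ n →
      (delBunch G u w).underlying.Reachable x y := by
  intro n
  induction n with
  | zero =>
    intro x y hx hy p hp
    cases p with
    | nil => exact SimpleGraph.Reachable.refl x
    | cons h q => simp at hp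
  | succ n ih =>
    intro x y hx hy p hp
    cases p with
    | nil => exact SimpleGraph.Reachable.refl x
    | @cons _ z _ h q =>
      by_cases hz : z = u
      · cases q with
        | nil => exact absurd (hz.symm.trans rfl) (Ne.symm hy)
        | @cons _ z2 _ h2 q2 =>
          have hmu : G.mul u z2 ≠ 0 := by
            rw [hz] at h2
            unfold underlying at h2
            omega
          have hz2 : z2 = w := hw z2 hmu
          have hxw : x = w := by
            rw [hz] at h
            have : G.mul u x ≠ 0 := by
              have hs := h.symm
              unfold underlying at hs
              omega
            exact hw x this
          have hz2x : z2 = x := hz2.trans hxw.symm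
          have hq2 : (q2.copy hz2x rfl).length ≤ n := by
            rw [SimpleGraph.Walk.length_copy]
            simp only [SimpleGraph.Walk.length_cons] at hp
            omega
          exact ih x y hx hy (q2.copy hz2x rfl) hq2
      · have adj' : (delBunch G u w).underlying.Adj x z := by
          rw [delBunch_adj hx hz]; exact h
        have hq : q.length ≤ n := by
          simp only [SimpleGraph.Walk.length_cons] at hp
          omega
        exact (adj'.reachable).trans (ih z y hz hy q hq)

end BananaAux

namespace BananaAux

open Multigraph

variable {V : Type} [Fintype V]

lemma delBunch_sum (G : Multigraph V) {u w : V} (huw : u ≠ w) :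
    (∑ x, ∑ y, (delBunch G u w).mul x y) + 2 * G.mul u w = ∑ x, ∑ y, G.mul x y := by
  have hpt : ∀ x y, G.mul x y = (delBunch G u w).mul x y
      + (if (x = u ∧ y = w) ∨ (x = w ∧ y = u) then G.mul x y else 0) := by
    intro x y
    by_cases h : (x = u ∧ y = w) ∨ (x = w ∧ y = u)
    · simp [delBunch, h]
    · simp [delBunch, h]
  have hrow : ∀ x, (∑ y, if (x = u ∧ y = w) ∨ (x = w ∧ y = u) then G.mul x y else 0)
      = (if x = u then G.mul x w else 0) + (if x = w then G.mul x u else 0) := by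
    intro x
    by_cases hxu : x = u
    · have hxw : x ≠ w := by rw [hxu]; exact huw
      have hc : ∀ y, ((x = u ∧ y = w) ∨ (x = w ∧ y = u)) ↔ (y = w) := by
        intro y; constructor
        · rintro (⟨_, h2⟩ | ⟨h1, _⟩)
          · exact h2
          · exact absurd h1 hxw
        · intro h2; exact Or.inl ⟨hxu, h2⟩
      simp only [hc, Finset.sum_ite_eq' Finset.univ w (fun y => G.mul x y),
        Finset.mem_univ, if_true, if_pos hxu, if_neg hxw, add_zero]
    · by_cases hxw : x = w
      · have hc : ∀ y, ((x = u ∧ y = w) ∨ (x = w ∧ y = u)) ↔ (y = u) := by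
          intro y; constructor
          · rintro (⟨h1, _⟩ | ⟨_, h2⟩)
            · exact absurd h1 hxu
            · exact h2
          · intro h2; exact Or.inr ⟨hxw, h2⟩
        simp only [hc, Finset.sum_ite_eq' Finset.univ u (fun y => G.mul x y),
          Finset.mem_univ, if_true, if_pos hxw, if_neg hxu, zero_add]
      · have hc : ∀ y, ¬ ((x = u ∧ y = w) ∨ (x = w ∧ y = u)) := by
          intro y; rintro (⟨h1, _⟩ | ⟨h1, _⟩)
          · exact hxu h1
          · exact hxw h1
        simp only [if_neg (hc _), if_neg hxu, if_neg hxw, Finset.sum_const_zero, add_zero]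
  calc (∑ x, ∑ y, (delBunch G u w).mul x y) + 2 * G.mul u w
      = (∑ x, ∑ y, (delBunch G u w).mul x y)
        + ∑ x, ((if x = u then G.mul x w else 0) + (if x = w then G.mul x u else 0)) := by
        rw [Finset.sum_add_distrib]
        rw [Finset.sum_ite_eq' Finset.univ u (fun x => G.mul x w),
          Finset.sum_ite_eq' Finset.univ w (fun x => G.mul x u)]
        simp only [Finset.mem_univ, if_true]
        rw [G.symm w u]
        ring
    _ = ∑ x, ∑ y, G.mul x y := by
        rw [← Finset.sum_add_distrib]
        apply Finset.sum_congr rfl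
        intro x _
        rw [← hrow x, ← Finset.sum_add_distrib]
        apply Finset.sum_congr rfl
        intro y _
        exact (hpt x y).symm

lemma delBunch_edgeCount (G : Multigraph V) {u w : V} (huw : u ≠ w) :
    (delBunch G u w).edgeCount + G.mul u w = G.edgeCount := by
  unfold edgeCount
  rw [← delBunch_sum G huw]
  rw [show 2 * G.mul u w = G.mul u w * 2 by ring]
  rw [Nat.add_mul_div_right _ _ (by norm_num : (0:ℕ) < 2)]

lemma delBunch_edgeFinset (G : Multigraph V) (u w : V) :
    (delBunch G u w).underlying.edgeFinset = G.underlying.edgeFinset.erase s(u, w) := by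
  ext e
  induction e with
  | _ a b =>
    simp only [SimpleGraph.mem_edgeFinset, Finset.mem_erase, SimpleGraph.mem_edgeSet]
    have h1 : (delBunch G u w).underlying.Adj a b
        ↔ (¬ ((a = u ∧ b = w) ∨ (a = w ∧ b = u)) ∧ G.underlying.Adj a b) := by
      show 0 < (delBunch G u w).mul a b ↔ _
      by_cases h : (a = u ∧ b = w) ∨ (a = w ∧ b = u)
      · simp [delBunch, h]
      · simp only [delBunch, h, if_false]
        exact Iff.symm (and_iff_right (by tauto))
    have h2 : (s(a, b) ≠ s(u, w)) ↔ ¬ ((a = u ∧ b = w) ∨ (a = w ∧ b = u)) := by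
      rw [not_iff_not, Sym2.eq_iff]
    rw [h1, h2]

lemma delBunch_edgeFinset_card (G : Multigraph V) {u w : V} (h : 0 < G.mul u w) :
    (delBunch G u w).underlying.edgeFinset.card + 1 = G.underlying.edgeFinset.card := by
  rw [delBunch_edgeFinset]
  have hmem : s(u, w) ∈ G.underlying.edgeFinset := by
    rw [SimpleGraph.mem_edgeFinset, SimpleGraph.mem_edgeSet]
    exact h
  rw [Finset.card_erase_of_mem hmem]
  have : 0 < G.underlying.edgeFinset.card := Finset.card_pos.mpr ⟨_, hmem⟩
  omega

end BananaAux

namespace BananaAux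

open Multigraph

variable {V : Type} [Fintype V]

lemma degree_eq_sum (G : Multigraph V) (x : V) :
    G.underlying.degree x = ∑ y, if G.underlying.Adj x y then 1 else 0 := by
  rw [SimpleGraph.degree, SimpleGraph.neighborFinset_eq_filter, Finset.card_filter]

lemma edgeCount_ge (G : Multigraph V) :
    G.underlying.edgeFinset.card ≤ G.edgeCount := by
  have h1 : ∑ x, G.underlying.degree x ≤ ∑ x, ∑ y, G.mul x y := by
    apply Finset.sum_le_sum
    intro x _
    rw [degree_eq_sum]
    apply Finset.sum_le_sum
    intro y _
    by_cases h : G.underlying.Adj x y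
    · simp only [if_pos h]
      exact h
    · simp only [if_neg h]
      exact Nat.zero_le _
  rw [SimpleGraph.sum_degrees_eq_twice_card_edges] at h1
  unfold edgeCount
  exact Nat.le_div_iff_mul_le (by norm_num) |>.mpr (by omega)

lemma exists_leaf (G : Multigraph V) (A : Finset V)
    (hsupp : ∀ x y, G.mul x y ≠ 0 → x ∈ A ∧ y ∈ A)
    (hreach : ∀ x ∈ A, ∀ y ∈ A, G.underlying.Reachable x y)
    (hcount : G.underlying.edgeFinset.card + 1 = A.card)
    (v : V) (hv : v ∈ A) (h2 : 2 ≤ A.card) :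
    ∃ u ∈ A, u ≠ v ∧ ∃ w, G.mul u w ≠ 0 ∧ (∀ z, G.mul u z ≠ 0 → z = w) := by
  have hdeg0 : ∀ x, x ∉ A → G.underlying.degree x = 0 := by
    intro x hx
    rw [degree_eq_sum]
    apply Finset.sum_eq_zero
    intro y _
    have : ¬ G.underlying.Adj x y := by
      intro h
      have : G.mul x y ≠ 0 := by
        have : 0 < G.mul x y := h
        omega
      exact hx (hsupp x y this).1
    simp [this]
  have hdeg1 : ∀ x ∈ A, 0 < G.underlying.degree x := by
    intro x hx
    obtain ⟨y, hy, hyx⟩ := Finset.exists_mem_ne (s := A) (by omega) x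
    obtain ⟨p⟩ := hreach x hx y hy
    cases p with
    | nil => exact absurd rfl hyx
    | @cons _ z _ h q =>
      exact (SimpleGraph.degree_pos_iff_exists_adj _ _).mpr ⟨z, h⟩
  have hsum : ∑ x ∈ A, G.underlying.degree x = 2 * (A.card - 1) := by
    have : ∑ x ∈ A, G.underlying.degree x = ∑ x, G.underlying.degree x := by
      apply Finset.sum_subset (Finset.subset_univ A)
      intro x _ hx
      exact hdeg0 x hx
    rw [this, SimpleGraph.sum_degrees_eq_twice_card_edges]
    omega
  by_contra hcon
  push_neg at hcon
  have hbig : ∀ x ∈ A.erase v, 2 ≤ G.underlying.degree x := by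
    intro x hx
    obtain ⟨hxv, hxA⟩ := Finset.mem_erase.mp hx
    rcases Nat.lt_or_ge (G.underlying.degree x) 2 with h | h
    · exfalso
      have hd1 : G.underlying.degree x = 1 := by
        have := hdeg1 x hxA
        omega
      have := Finset.card_eq_one.mp (hd1 ▸ rfl : (G.underlying.neighborFinset x).card = 1)
      obtain ⟨w, hw⟩ := this
      have hadj : ∀ z, G.underlying.Adj x z ↔ z = w := by
        intro z
        rw [← SimpleGraph.mem_neighborFinset, hw, Finset.mem_singleton]
      have hmulw : G.mul x w ≠ 0 := by
        have : 0 < G.mul x w := (hadj w).mpr rfl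
        omega
      obtain ⟨z, hz, hzw⟩ := hcon x hxA hxv w hmulw
      apply hzw
      have : G.underlying.Adj x z := by
        have : 0 < G.mul x z := by omega
        exact this
      exact (hadj z).mp this
    · exact h
  have hA : ∑ x ∈ A, G.underlying.degree x
      = G.underlying.degree v + ∑ x ∈ A.erase v, G.underlying.degree x :=
    (Finset.add_sum_erase A _ hv).symm
  have hge : 2 * (A.erase v).card ≤ ∑ x ∈ A.erase v, G.underlying.degree x := by
    calc 2 * (A.erase v).card = ∑ _x ∈ A.erase v, 2 := by
          rw [Finset.sum_const]; ring
    _ ≤ _ := Finset.sum_le_sum hbig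
  have hcv : (A.erase v).card = A.card - 1 := Finset.card_erase_of_mem hv
  have hdv := hdeg1 v hv
  omega

end BananaAux

namespace BananaAux

open Multigraph

variable {V : Type} [Fintype V]

lemma equiv_u_zero {G : Multigraph V} {u w : V} (hwuniq : ∀ z, G.mul u z ≠ 0 → z = w)
    {B E : V → ℤ} (heq : (delBunch G u w).LinEquiv B E) (hBu : B u = 0) : E u = 0 := by
  obtain ⟨σ, hσ⟩ := heq
  rw [hσ u, hBu]
  have h0 : ∀ b, ((delBunch G u w).mul u b : ℤ) * (σ b - σ u) = 0 := by
    intro b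
    rw [delBunch_mul_u hwuniq]
    simp
  rw [Finset.sum_congr rfl (fun b _ => h0 b)]
  simp

lemma transfer {G : Multigraph V} {u w : V} (huw : u ≠ w)
    (hwuniq : ∀ z, G.mul u z ≠ 0 → z = w)
    {B E : V → ℤ} (heq : (delBunch G u w).LinEquiv B E) (hBu : B u = 0)
    (c T t : ℤ) (hT : T = (G.mul u w : ℤ) * t) :
    G.LinEquiv (fun a => B a + if a = u then c else 0)
      (fun a => E a + (if a = u then c + T else 0) - (if a = w then T else 0)) := by
  obtain ⟨σ'', hσ⟩ := heq
  classical
  set σ : V → ℤ := fun a => if a = u then σ'' w - t else σ'' a with hσdef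
  refine ⟨σ, ?_⟩
  have hσu : σ u = σ'' w - t := by simp [hσdef]
  have hσne : ∀ a, a ≠ u → σ a = σ'' a := by
    intro a ha; simp [hσdef, ha]
  intro a
  by_cases hau : a = u
  · subst hau
    have hEu : E a = 0 := equiv_u_zero hwuniq ⟨σ'', hσ⟩ hBu
    have haw : ¬ (a = w) := huw
    simp only [if_pos rfl, if_neg haw, hEu, hBu]
    have hsum : ∑ b, (G.mul a b : ℤ) * (σ b - σ a) = T := by
      rw [Finset.sum_eq_single w]
      · rw [hσne w (fun h => huw h.symm), hσu, hT]
        ring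
      · intro b _ hbw
        have hz : G.mul a b = 0 := by
          by_contra h
          exact hbw (hwuniq b h)
        rw [hz]; simp
      · intro h; exact absurd (Finset.mem_univ w) h
    rw [hsum]
    simp only [if_true]
    ring
  · -- a ≠ u
    have hsplitG : ∑ b, (G.mul a b : ℤ) * (σ b - σ a)
        = (G.mul a u : ℤ) * (σ u - σ a) + ∑ b ∈ Finset.univ.erase u, (G.mul a b : ℤ) * (σ b - σ a) :=
      (Finset.add_sum_erase _ _ (Finset.mem_univ u)).symm
    have hsplitG' : ∑ b, ((delBunch G u w).mul a b : ℤ) * (σ'' b - σ'' a)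
        = ((delBunch G u w).mul a u : ℤ) * (σ'' u - σ'' a)
          + ∑ b ∈ Finset.univ.erase u, ((delBunch G u w).mul a b : ℤ) * (σ'' b - σ'' a) :=
      (Finset.add_sum_erase _ _ (Finset.mem_univ u)).symm
    have hzero : ((delBunch G u w).mul a u : ℤ) = 0 := by
      rw [delBunch_mul_u' hwuniq]; rfl
    have hsame : ∑ b ∈ Finset.univ.erase u, (G.mul a b : ℤ) * (σ b - σ a)
        = ∑ b ∈ Finset.univ.erase u, ((delBunch G u w).mul a b : ℤ) * (σ'' b - σ'' a) := by
      apply Finset.sum_congr rfl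
      intro b hb
      have hbu : b ≠ u := (Finset.mem_erase.mp hb).1
      rw [delBunch_mul_of_ne hau hbu, hσne b hbu, hσne a hau]
    have h2 : ∑ b ∈ Finset.univ.erase u, ((delBunch G u w).mul a b : ℤ) * (σ'' b - σ'' a)
        = E a - B a := by
      have hh := hσ a
      rw [hsplitG', hzero] at hh
      linarith
    by_cases haw : a = w
    · have h1 : (G.mul a u : ℤ) * (σ u - σ a) = -T := by
        rw [hσu, hσne a hau, haw, G.symm w u, hT]
        ring
      simp only [if_neg hau, if_pos haw]
      rw [hsplitG, hsame, h1, h2]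
      ring
    · have h1 : (G.mul a u : ℤ) * (σ u - σ a) = 0 := by
        have hz : G.mul a u = 0 := by
          by_contra h
          have hzz : G.mul u a ≠ 0 := by rw [G.symm u a]; exact h
          exact haw (hwuniq a hzz)
        rw [hz]
        push_cast
        ring
      simp only [if_neg hau, if_neg haw]
      rw [hsplitG, hsame, h1, h2]
      ring
end BananaAux

namespace BananaAux

open Multigraph

variable {V : Type} [Fintype V]

lemma slot_choice (m r : ℕ) (hm : 1 ≤ m) :
    ∃ T c t : ℕ, T = m * t ∧ max 1 r ≤ c + T ∧ 2 * c + sw T ≤ (m - 1) + sw r := by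
  have hmax : ∀ x : ℕ, 1 ≤ x → r ≤ x → max 1 r ≤ x := fun x h1 h2 => max_le h1 h2
  rcases Nat.lt_or_ge m 2 with h1 | h2
  · -- m = 1
    have hm1 : m = 1 := by omega
    refine ⟨max r 1, 0, max r 1, by simp [hm1], ?_, ?_⟩
    · apply hmax <;> omega
    · have h3 : max r 1 = r ∨ max r 1 = 1 := max_choice r 1
      unfold sw; omega
  rcases Nat.lt_or_ge m 4 with h3 | h4
  · -- m = 2 or 3
    rcases Nat.lt_or_ge r 2 with hr | hr
    · -- r ≤ 1
      rcases Nat.lt_or_ge m 3 with hm2 | hm3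
      · exact ⟨2, 0, 1, by omega, by apply hmax <;> omega, by unfold sw; omega⟩
      · exact ⟨0, 1, 0, by omega, by apply hmax <;> omega, by unfold sw; omega⟩
    · by_cases hsp : m = 3 ∧ r = 2
      · exact ⟨3, 0, 1, by omega, by apply hmax <;> omega, by unfold sw; omega⟩
      · -- fold: r ≥ m here (m=2: r≥2 ✓; m=3: r≥3 since r=2 excluded)
        have hdm := Nat.div_add_mod r m
        have hmod : r % m < m := Nat.mod_lt r (by omega)
        have hdiv1 : 1 ≤ r / m := by
          apply Nat.one_le_div_iff (by omega) |>.mpr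
          omega
        refine ⟨m * (r / m), r % m, r / m, rfl, ?_, ?_⟩
        · apply hmax <;> omega
        · unfold sw; omega
  · -- m ≥ 4
    rcases Nat.lt_or_ge r 2 with hr | hr
    · exact ⟨0, 1, 0, by omega, by apply hmax <;> omega, by unfold sw; omega⟩
    · exact ⟨0, r, 0, by omega, by apply hmax <;> omega, by unfold sw; omega⟩

end BananaAux

namespace BananaAux

open Multigraph

variable {V : Type} [Fintype V]

lemma key : ∀ (n : ℕ) (A : Finset V) (G : Multigraph V), A.card ≤ n →
    (∀ x y, G.mul x y ≠ 0 → x ∈ A ∧ y ∈ A) →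
    (∀ x ∈ A, ∀ y ∈ A, G.underlying.Reachable x y) →
    (G.underlying.edgeFinset.card + 1 = A.card) →
    ∀ v, v ∈ A → ∀ Y : V → ℕ, (∀ x, x ∉ A → Y x = 0) →
    ∃ D : V → ℤ, Effective D ∧ (∀ x, x ∉ A → D x = 0) ∧
      2 * degree D ≤ ((G.edgeCount + 1 - A.card) + 1 + ∑ x ∈ A, sw (Y x) : ℕ) ∧
      ∀ x ∈ A, ∃ E : V → ℤ, G.LinEquiv (fun y => D y + if y = v then 1 else 0) E ∧
        Effective E ∧ (max 1 (Y x) : ℤ) ≤ E x := by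
  intro n
  induction n with
  | zero =>
    intro A G hA _ _ _ v hv _ _
    have : 0 < A.card := Finset.card_pos.mpr ⟨v, hv⟩
    omega
  | succ n ih =>
    intro A G hA hsupp hreach hcount v hv Y hY
    by_cases hA1 : A.card ≤ 1
    · -- BASE CASE : A = {v}
      have hcard1 : A.card = 1 := by
        have : 0 < A.card := Finset.card_pos.mpr ⟨v, hv⟩
        omega
      have hAv : A = {v} := by
        obtain ⟨a, ha⟩ := Finset.card_eq_one.mp hcard1
        rw [ha] at hv ⊢
        rw [Finset.mem_singleton] at hv
        rw [hv]
      have hmul : ∀ x y, G.mul x y = 0 := by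
        intro x y
        by_contra h
        obtain ⟨hx, hy⟩ := hsupp x y h
        rw [hAv, Finset.mem_singleton] at hx hy
        rw [hx, hy] at h
        exact h (G.loopless v)
      have hEC : G.edgeCount = 0 := by
        unfold edgeCount
        simp [hmul]
      refine ⟨fun y => if y = v then (max 1 (Y v) : ℤ) - 1 else 0, ?_, ?_, ?_, ?_⟩
      · intro y
        by_cases h : y = v
        · simp only [if_pos h]
          have := le_max_left (1:ℤ) (Y v)
          omega
        · simp [h]
      · intro x hx
        have : x ≠ v := by
          intro h
          rw [h] at hx
          exact hx (hAv ▸ Finset.mem_singleton_self v)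
        simp [this]
      · have hdeg : degree (fun y => if y = v then (max 1 (Y v) : ℤ) - 1 else 0)
            = (max 1 (Y v) : ℤ) - 1 := by
          unfold degree
          rw [Finset.sum_ite_eq' Finset.univ v (fun _ => (max 1 (Y v) : ℤ) - 1)]
          simp
        rw [hdeg, hEC, hAv, Finset.sum_singleton]
        have h1 := le_max_left (1:ℤ) (Y v)
        have h2 := le_max_right (1:ℤ) (Y v)
        have h3 : max (1:ℤ) (Y v) = 1 ∨ max (1:ℤ) (Y v) = (Y v : ℤ) := max_choice _ _
        have h4 : sw (Y v) = 2 * Y v - 3 := rfl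
        omega
      · intro x hx
        rw [hAv, Finset.mem_singleton] at hx
        refine ⟨fun y => (if y = v then (max 1 (Y v) : ℤ) - 1 else 0) + (if y = v then 1 else 0),
          ⟨0, ?_⟩, ?_, ?_⟩
        · intro a
          simp [hmul]
        · intro y
          by_cases h : y = v
          · simp only [if_pos h]
            have := le_max_left (1:ℤ) (Y v)
            omega
          · simp [h]
        · rw [hx]
          show (max 1 ((Y v) : ℤ)) ≤ (if v = v then (max 1 (Y v) : ℤ) - 1 else 0) + (if v = v then 1 else 0)
          split_ifs with h1
          · omega
          · exact absurd rfl h1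
    · -- STEP CASE
      have hA2 : 2 ≤ A.card := by omega
      obtain ⟨u, huA, huv, w, hmuw, hwuniq⟩ := exists_leaf G A hsupp hreach hcount v hv hA2
      have hwA : w ∈ A := (hsupp u w hmuw).2
      have huw : u ≠ w := by
        intro h
        rw [h] at hmuw
        exact hmuw (G.loopless w)
      have hm1 : 1 ≤ G.mul u w := Nat.one_le_iff_ne_zero.mpr hmuw
      have hvA' : v ∈ A.erase u := Finset.mem_erase.mpr ⟨Ne.symm huv, hv⟩
      have hwA' : w ∈ A.erase u := Finset.mem_erase.mpr ⟨Ne.symm huw, hwA⟩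
      have hcardA' : (A.erase u).card + 1 = A.card := by
        rw [Finset.card_erase_of_mem huA]
        omega
      have hsupp' : ∀ x y, (delBunch G u w).mul x y ≠ 0 → x ∈ A.erase u ∧ y ∈ A.erase u := by
        intro x y h
        have hxu : x ≠ u := by
          intro hxu; rw [hxu] at h; exact h (delBunch_mul_u hwuniq)
        have hyu : y ≠ u := by
          intro hyu; rw [hyu] at h; exact h (delBunch_mul_u' hwuniq)
        have hmulxy : G.mul x y ≠ 0 := by
          rw [delBunch_mul_of_ne hxu hyu] at h; exact h
        obtain ⟨hx, hy⟩ := hsupp x y hmulxy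
        exact ⟨Finset.mem_erase.mpr ⟨hxu, hx⟩, Finset.mem_erase.mpr ⟨hyu, hy⟩⟩
      have hreach' : ∀ x ∈ A.erase u, ∀ y ∈ A.erase u,
          (delBunch G u w).underlying.Reachable x y := by
        intro x hx y hy
        obtain ⟨hxu, hxA⟩ := Finset.mem_erase.mp hx
        obtain ⟨hyu, hyA⟩ := Finset.mem_erase.mp hy
        obtain ⟨p⟩ := hreach x hxA y hyA
        exact reach_del G u w hwuniq p.length x y hxu hyu p le_rfl
      have hcount' : (delBunch G u w).underlying.edgeFinset.card + 1 = (A.erase u).card := by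
        have h1 := delBunch_edgeFinset_card G (show 0 < G.mul u w by omega)
        omega
      obtain ⟨T, c, t, hTt, harr, hledger⟩ := slot_choice (G.mul u w) (Y u) hm1
      set Y' : V → ℕ := fun x => if x = u then 0 else if x = w then max (Y w) T else Y x
        with hY'def
      have hY'u : Y' u = 0 := by simp [hY'def]
      have hY'w : Y' w = max (Y w) T := by simp [hY'def, huw.symm]
      have hY'x : ∀ x, x ≠ u → x ≠ w → Y' x = Y x := by
        intro x h1 h2; simp [hY'def, h1, h2]
      have hY'0 : ∀ x, x ∉ A.erase u → Y' x = 0 := by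
        intro x hx
        by_cases hxu : x = u
        · rw [hxu]; exact hY'u
        · have hxA : x ∉ A := by
            intro hxA; exact hx (Finset.mem_erase.mpr ⟨hxu, hxA⟩)
          have hxw : x ≠ w := by intro h; rw [h] at hxA; exact hxA hwA
          rw [hY'x x hxu hxw]; exact hY x hxA
      obtain ⟨D'', hD''eff, hD''supp, hD''deg, hD''cl⟩ :=
        ih (A.erase u) (delBunch G u w) (by omega) hsupp' hreach' hcount' v hvA' Y' hY'0
      have hEC : (delBunch G u w).edgeCount + G.mul u w = G.edgeCount := delBunch_edgeCount G huw
      have hECge : (delBunch G u w).underlying.edgeFinset.card ≤ (delBunch G u w).edgeCount :=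
        edgeCount_ge _
      have hsumA : ∑ x ∈ A, sw (Y x) = sw (Y u) + ∑ x ∈ A.erase u, sw (Y x) :=
        (Finset.add_sum_erase A _ huA).symm
      have hsumA' : ∑ x ∈ A.erase u, sw (Y' x) ≤ sw T + ∑ x ∈ A.erase u, sw (Y x) := by
        rw [← Finset.add_sum_erase _ (fun x => sw (Y' x)) hwA',
            ← Finset.add_sum_erase _ (fun x => sw (Y x)) hwA']
        have h2 : ∑ x ∈ (A.erase u).erase w, sw (Y' x)
            = ∑ x ∈ (A.erase u).erase w, sw (Y x) := by
          apply Finset.sum_congr rfl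
          intro x hxx
          obtain ⟨hxw, hxu'⟩ := Finset.mem_erase.mp hxx
          obtain ⟨hxu, _⟩ := Finset.mem_erase.mp hxu'
          rw [hY'x x hxu hxw]
        rw [h2, hY'w]
        have := sw_max_le (Y w) T
        omega
      have hD''u : D'' u = 0 := hD''supp u (by simp)
      have hBu : (fun y => D'' y + if y = v then 1 else 0) u = 0 := by
        simp only [hD''u, if_neg huv, add_zero]
      refine ⟨fun y => D'' y + if y = u then (c:ℤ) else 0, ?_, ?_, ?_, ?_⟩
      · intro y
        by_cases h : y = u
        · simp only [if_pos h]
          have h1 := hD''eff y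
          have h2 : (0:ℤ) ≤ (c:ℤ) := Int.natCast_nonneg c
          omega
        · simp only [if_neg h, add_zero]
          exact hD''eff y
      · intro x hx
        have hxu : x ≠ u := by intro h; rw [h] at hx; exact hx huA
        have hx' : x ∉ A.erase u := fun hc => hx (Finset.mem_of_mem_erase hc)
        simp only [if_neg hxu, add_zero]
        exact hD''supp x hx'
      · have hdegD : degree (fun y => D'' y + if y = u then (c:ℤ) else 0)
            = degree D'' + c := by
          unfold degree
          rw [Finset.sum_add_distrib, Finset.sum_ite_eq' Finset.univ u (fun _ => (c:ℤ))]
          simp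
        rw [hdegD]
        omega
      · intro x hxA
        by_cases hxu : x = u
        · obtain ⟨E'', hlin'', heff'', hval''⟩ := hD''cl w hwA'
          have hTint : (T:ℤ) = (G.mul u w : ℤ) * t := by
            rw [hTt]; push_cast; ring
          have htr := transfer huw hwuniq hlin'' hBu (c) (T) (t) hTint
          have hEu0 : E'' u = 0 := equiv_u_zero hwuniq hlin'' hBu
          have hfun : (fun a => (fun y => D'' y + if y = v then 1 else 0) a
                + if a = u then (c:ℤ) else 0)
              = (fun y => (D'' y + if y = u then (c:ℤ) else 0) + if y = v then 1 else 0) := by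
            funext a; ring
          rw [hfun] at htr
          have hE''wT : (T:ℤ) ≤ E'' w := by
            have h1 : (max 1 (Y' w) : ℤ) ≤ E'' w := hval''
            have h2 : (T:ℤ) ≤ (Y' w : ℤ) := by
              rw [hY'w]
              exact_mod_cast le_max_right (Y w) T
            have h3 : ((Y' w : ℤ)) ≤ max 1 ((Y' w : ℤ)) := le_max_right _ _
            omega
          refine ⟨_, htr, ?_, ?_⟩
          · intro a
            show (0:ℤ) ≤ E'' a + (if a = u then (c:ℤ) + T else 0) - (if a = w then (T:ℤ) else 0)
            have h2 : (0:ℤ) ≤ (c:ℤ) := Int.natCast_nonneg c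
            have h3 : (0:ℤ) ≤ (T:ℤ) := Int.natCast_nonneg T
            have h4 := heff'' a
            by_cases hau : a = u
            · have haw : ¬ (a = w) := by rw [hau]; exact huw
              rw [if_pos hau, if_neg haw, hau, hEu0]
              omega
            · by_cases haw : a = w
              · rw [if_neg hau, if_pos haw, haw]
                have := hE''wT
                omega
              · rw [if_neg hau, if_neg haw]
                omega
          · rw [hxu]
            show (max 1 ((Y u : ℤ))) ≤ E'' u + (if u = u then (c:ℤ) + T else 0)
              - (if u = w then (T:ℤ) else 0)
            rw [if_pos (rfl : u = u), if_neg huw, hEu0]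
            have harr' : ((max 1 (Y u) : ℕ) : ℤ) ≤ (c:ℤ) + T := by exact_mod_cast harr
            have hcast : ((max 1 (Y u) : ℕ) : ℤ) = max 1 ((Y u : ℤ)) := by
              push_cast; rfl
            omega
        · have hxA' : x ∈ A.erase u := Finset.mem_erase.mpr ⟨hxu, hxA⟩
          obtain ⟨E'', hlin'', heff'', hval''⟩ := hD''cl x hxA'
          have htr := transfer huw hwuniq hlin'' hBu (c) 0 0 (by ring)
          have hEu0 : E'' u = 0 := equiv_u_zero hwuniq hlin'' hBu
          have hfun : (fun a => (fun y => D'' y + if y = v then 1 else 0) a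
                + if a = u then (c:ℤ) else 0)
              = (fun y => (D'' y + if y = u then (c:ℤ) else 0) + if y = v then 1 else 0) := by
            funext a; ring
          rw [hfun] at htr
          refine ⟨_, htr, ?_, ?_⟩
          · intro a
            show (0:ℤ) ≤ E'' a + (if a = u then (c:ℤ) + 0 else 0) - (if a = w then (0:ℤ) else 0)
            have h2 : (0:ℤ) ≤ (c:ℤ) := Int.natCast_nonneg c
            have h3 := heff'' a
            by_cases hau : a = u
            · have haw : ¬ (a = w) := by rw [hau]; exact huw
              rw [if_pos hau, if_neg haw, hau, hEu0]
              omega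
            · by_cases haw : a = w
              · rw [if_neg hau, if_pos haw]
                omega
              · rw [if_neg hau, if_neg haw]
                omega
          · show (max 1 ((Y x : ℤ))) ≤ E'' x + (if x = u then (c:ℤ) + 0 else 0)
              - (if x = w then (0:ℤ) else 0)
            have hval : (max 1 ((Y' x : ℤ))) ≤ E'' x := hval''
            have hYle : Y x ≤ Y' x := by
              by_cases hxw : x = w
              · rw [hxw, hY'w]
                exact le_max_left _ _
              · rw [hY'x x hxu hxw]
            have h1 : (max 1 ((Y x : ℤ))) ≤ max 1 ((Y' x : ℤ)) := by
              apply max_le (le_max_left _ _)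
              have : ((Y x : ℤ)) ≤ ((Y' x : ℤ)) := by exact_mod_cast hYle
              exact le_trans this (le_max_right _ _)
            rw [if_neg hxu]
            by_cases hxw : x = w
            · rw [if_pos hxw]
              omega
            · rw [if_neg hxw]
              omega

end BananaAux

open BananaAux

open Multigraph in
/-- Every banana tree of genus `g` has gonality at most `⌊(g+3)/2⌋`. -/
theorem banana_tree_brill_noether_bound
    {V : Type} [Fintype V] (G : Multigraph V) (hG : G.IsBananaTree) :
    G.gonality ≤ (G.genus + 3) / 2 := by
  have hT : G.underlying.IsTree := hG
  have hconn : G.underlying.Connected := hT.isConnected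
  obtain ⟨v⟩ : Nonempty V := hconn.nonempty
  have hcount : G.underlying.edgeFinset.card + 1 = (Finset.univ : Finset V).card := by
    rw [Finset.card_univ]
    exact hT.card_edgeFinset
  obtain ⟨D, hDeff, -, hDdeg, hDcl⟩ := key (Fintype.card V) Finset.univ G
    (le_of_eq (Finset.card_univ))
    (fun x y _ => ⟨Finset.mem_univ x, Finset.mem_univ y⟩)
    (fun x _ y _ => hconn.preconnected x y) hcount v (Finset.mem_univ v)
    (fun _ => 0) (fun x _ => rfl)
  have hsum0 : ∑ x ∈ (Finset.univ : Finset V), sw ((fun _ => (0:ℕ)) x) = 0 := by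
    apply Finset.sum_eq_zero
    intro x _
    rfl
  have hgen : G.edgeCount + 1 - (Finset.univ : Finset V).card = G.genus := by
    rw [Finset.card_univ]
    rfl
  rw [hsum0, hgen] at hDdeg
  -- the positive-rank divisor of degree ≤ (genus+3)/2
  have hDveff : Effective (fun y => D y + if y = v then (1:ℤ) else 0) := by
    intro y
    show 0 ≤ D y + if y = v then (1:ℤ) else 0
    have h1 := hDeff y
    by_cases h : y = v
    · rw [if_pos h]; omega
    · rw [if_neg h]; omega
  have hdegDv : degree (fun y => D y + if y = v then (1:ℤ) else 0) = degree D + 1 := by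
    unfold degree
    rw [Finset.sum_add_distrib, Finset.sum_ite_eq' Finset.univ v (fun _ => (1:ℤ))]
    simp
  have hDvnn : 0 ≤ degree (fun y => D y + if y = v then (1:ℤ) else 0) := by
    unfold degree
    apply Finset.sum_nonneg
    intro y _
    exact hDveff y
  set d0 := (degree (fun y => D y + if y = v then (1:ℤ) else 0)).toNat with hd0def
  have hd0 : degree (fun y => D y + if y = v then (1:ℤ) else 0) = (d0 : ℤ) :=
    (Int.toNat_of_nonneg hDvnn).symm
  have hle : d0 ≤ (G.genus + 3) / 2 := by
    apply (Nat.le_div_iff_mul_le (by norm_num : 0 < 2)).mpr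
    have h2 : (2:ℤ) * (d0 : ℤ) ≤ ((G.genus + 3 : ℕ) : ℤ) := by
      rw [← hd0, hdegDv]
      push_cast
      omega
    omega
  set pad := (G.genus + 3) / 2 - d0 with hpaddef
  apply Nat.sInf_le
  refine ⟨fun y => (D y + if y = v then (1:ℤ) else 0) + if y = v then (pad : ℤ) else 0,
    ?_, ?_, ?_⟩
  · intro y
    show 0 ≤ (D y + if y = v then (1:ℤ) else 0) + if y = v then (pad : ℤ) else 0
    have h1 := hDveff y
    have h1' : 0 ≤ D y + if y = v then (1:ℤ) else 0 := h1
    by_cases h : y = v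
    · rw [if_pos h] at h1' ⊢
      have : (0:ℤ) ≤ (pad : ℤ) := Int.natCast_nonneg pad
      omega
    · rw [if_neg h] at h1' ⊢
      omega
  · intro x
    obtain ⟨E, hlin, heff, hval⟩ := hDcl x (Finset.mem_univ x)
    obtain ⟨σ, hσ⟩ := hlin
    refine ⟨fun y => E y + if y = v then (pad : ℤ) else 0, ⟨σ, ?_⟩, ?_, ?_⟩
    · intro a
      have h1 : E a = (D a + if a = v then (1:ℤ) else 0)
          + ∑ b, (G.mul a b : ℤ) * (σ b - σ a) := hσ a
      show E a + (if a = v then (pad:ℤ) else 0)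
          = ((D a + if a = v then (1:ℤ) else 0) + if a = v then (pad:ℤ) else 0)
            + ∑ b, (G.mul a b : ℤ) * (σ b - σ a)
      by_cases h : a = v
      · simp only [if_pos h] at h1 ⊢
        linarith
      · simp only [if_neg h] at h1 ⊢
        linarith
    · intro y
      show 0 ≤ E y + if y = v then (pad : ℤ) else 0
      have h1 := heff y
      by_cases h : y = v
      · rw [if_pos h]
        have : (0:ℤ) ≤ (pad : ℤ) := Int.natCast_nonneg pad
        omega
      · rw [if_neg h]
        omega
    · show 1 ≤ E x + if x = v then (pad : ℤ) else 0
      have h1 : (1:ℤ) ≤ max 1 (((0:ℕ) : ℤ)) := le_max_left _ _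
      have h2 : (max 1 (((0:ℕ) : ℤ))) ≤ E x := hval
      have h3 : (1:ℤ) ≤ E x := le_trans h1 h2
      by_cases h : x = v
      · rw [if_pos h]
        have h4 : (0:ℤ) ≤ (pad : ℤ) := Int.natCast_nonneg pad
        linarith
      · rw [if_neg h]
        linarith
  · have hdeg2 : degree (fun y => (D y + if y = v then (1:ℤ) else 0)
        + if y = v then (pad : ℤ) else 0)
        = degree (fun y => D y + if y = v then (1:ℤ) else 0) + pad := by
      unfold degree
      rw [Finset.sum_add_distrib, Finset.sum_ite_eq' Finset.univ v (fun _ => (pad:ℤ))]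
      simp
    rw [hdeg2, hd0]
    have : d0 + pad = (G.genus + 3) / 2 := by omega
    push_cast
    omega
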